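/- Let A_c be an m×m complex Hurwitz matrix and B an arbitrary m×m complex matrix. Suppose Z₁, Z₂ : ℝ → ℂᵐ are differentiable functions satisfying Z₁′(t) = A_c·Z₁(t) + B·Z₂(t) and Z₂′(t) = −A_cᴴ·Z₂(t) for all t ≥ 0, and Z₂(t) → 0 as t → ∞. Then Z₂(t) = 0 for all t ≥ 0, Z₁(t) = exp(t·A_c)·Z₁(0) for all t ≥ 0, and Z₁(t) → 0 as t → ∞. -/

import Mathlib

open Matrix Polynomial Filter Topology

/-- A square complex matrix is Hurwitz if every root of its characteristic
polynomial has negative real part. -/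
def IsHurwitz {n : Type*} [Fintype n] [DecidableEq n] (A : Matrix n n ℂ) : Prop :=
  ∀ μ : ℂ, A.charpoly.IsRoot μ → μ.re < 0

variable {m : ℕ}

noncomputable def toCLM : Matrix (Fin m) (Fin m) ℂ →ₐ[ℂ] ((Fin m → ℂ) →L[ℂ] (Fin m → ℂ)) where
  toFun A := LinearMap.toContinuousLinearMap A.mulVecLin
  map_one' := by ext x : 1; simp
  map_mul' A B := by ext x : 1; simp
  map_zero' := by ext x : 1; show (0 : Matrix (Fin m) (Fin m) ℂ).mulVec x = _; simp
  map_add' A B := by ext x : 1; simp [Matrix.add_mulVec]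
  commutes' c := by ext x : 1; funext i; simp [Matrix.algebraMap_eq_diagonal, Matrix.mulVec_diagonal, Pi.algebraMap_apply, Algebra.algebraMap_self_apply]

@[simp] lemma toCLM_apply (A : Matrix (Fin m) (Fin m) ℂ) (x : Fin m → ℂ) :
    toCLM A x = A.mulVec x := rfl

lemma toCLM_continuous : Continuous (toCLM (m := m)) :=
  LinearMap.continuous_of_finiteDimensional (toCLM (m := m)).toLinearMap

lemma toCLM_exp (A : Matrix (Fin m) (Fin m) ℂ) :
    toCLM (NormedSpace.exp A) = NormedSpace.exp (toCLM A) := by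
  letI : SeminormedRing (Matrix (Fin m) (Fin m) ℂ) := Matrix.linftyOpSemiNormedRing
  letI : NormedRing (Matrix (Fin m) (Fin m) ℂ) := Matrix.linftyOpNormedRing
  letI : NormedAlgebra ℂ (Matrix (Fin m) (Fin m) ℂ) := Matrix.linftyOpNormedAlgebra
  letI : NormedAlgebra ℚ (Matrix (Fin m) (Fin m) ℂ) := NormedAlgebra.restrictScalars ℚ ℂ _
  exact NormedSpace.map_exp toCLM toCLM_continuous A
lemma aux_tendsto (j : ℕ) {c : ℝ} (hc : c < 0) :
    Tendsto (fun t : ℝ => t ^ j * Real.exp (c * t)) atTop (𝓝 0) := by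
  have h0 : (0:ℝ) < -c := by linarith
  have h1 := (Real.tendsto_pow_mul_exp_neg_atTop_nhds_zero j).comp
    (tendsto_id.const_mul_atTop h0)
  have h2 := h1.const_mul (((-c) ^ j)⁻¹)
  rw [mul_zero] at h2
  refine h2.congr fun t => ?_
  have hcne : (-c) ^ j ≠ 0 := pow_ne_zero _ (by linarith)
  field_simp
  simp only [Function.comp_apply, id]
  ring_nf

set_option maxHeartbeats 1000000 in
set_option synthInstance.maxHeartbeats 200000 in
lemma exp_apply_tendsto {m : ℕ} (C : Matrix (Fin m) (Fin m) ℂ)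
    (hC : ∀ μ ∈ spectrum ℂ C, μ.re < 0) (v : Fin m → ℂ) :
    Tendsto (fun t : ℝ => NormedSpace.exp ((t : ℂ) • toCLM C) v) atTop (𝓝 0) := by
  set N : (Fin m → ℂ) →L[ℂ] (Fin m → ℂ) := toCLM C with hN
  set N' : Module.End ℂ (Fin m → ℂ) := (N : (Fin m → ℂ) →ₗ[ℂ] (Fin m → ℂ)) with hN'
  let S : Submodule ℂ (Fin m → ℂ) :=
    { carrier := {w | Tendsto (fun t : ℝ => NormedSpace.exp ((t : ℂ) • N) w) atTop (𝓝 0)}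
      add_mem' := fun {a b} ha hb => by
        have := ha.add hb
        rw [add_zero] at this
        exact this.congr fun t => (map_add _ a b).symm
      zero_mem' := by
        simpa using tendsto_const_nhds.congr
          (fun t : ℝ => (map_zero (NormedSpace.exp ((t : ℂ) • N))).symm)
      smul_mem' := fun c {w} hw => by
        have := hw.const_smul c
        rw [smul_zero] at this
        exact this.congr fun t => ((NormedSpace.exp ((t : ℂ) • N)).map_smul c w).symm }
  suffices hS : ∀ w, w ∈ S by exact hS v
  intro w
  have htop : (⊤ : Submodule ℂ (Fin m → ℂ)) ≤ S := by
    rw [← Module.End.iSup_maxGenEigenspace_eq_top N']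
    refine iSup_le fun μ => ?_
    intro w hw
    rcases eq_or_ne w 0 with rfl | hw0
    · exact S.zero_mem
    obtain ⟨k, hk⟩ := (Module.End.mem_maxGenEigenspace N' μ w).1 hw
    -- μ has negative real part
    have hμ : μ.re < 0 := by
      have h1 : N'.HasEigenvalue μ := by
        refine Module.End.hasEigenvalue_of_hasGenEigenvalue (k := k) ?_
        rw [Module.End.HasGenEigenvalue]
        exact Submodule.ne_bot_iff _ |>.2
          ⟨w, (Module.End.mem_genEigenspace_nat).2 hk, hw0⟩
      have h2 : μ ∈ spectrum ℂ N' := Module.End.hasEigenvalue_iff_mem_spectrum.1 h1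
      have h3 : N' = Matrix.toLinAlgEquiv' C := by
        apply LinearMap.ext
        intro x
        simp [hN', hN, Matrix.toLinAlgEquiv'_apply]
      rw [h3, AlgEquiv.spectrum_eq] at h2
      exact hC _ h2
    -- coercion compat
    have cast : ∀ (j : ℕ) (x : Fin m → ℂ),
        ((N - μ • (1 : (Fin m → ℂ) →L[ℂ] (Fin m → ℂ))) ^ j) x
          = ((N' - μ • (1 : Module.End ℂ (Fin m → ℂ))) ^ j) x := by
      intro j
      induction j with
      | zero => intro x; simp
      | succ j ih =>
        intro x
        rw [pow_succ, pow_succ, ContinuousLinearMap.mul_apply, Module.End.mul_apply]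
        have : (N - μ • (1 : (Fin m → ℂ) →L[ℂ] (Fin m → ℂ))) x
            = (N' - μ • (1 : Module.End ℂ (Fin m → ℂ))) x := by
          simp [hN']
        rw [this, ih]
    have hzero : ∀ n, k ≤ n →
        ((N - μ • (1 : (Fin m → ℂ) →L[ℂ] (Fin m → ℂ))) ^ n) w = 0 := by
      intro n hn
      obtain ⟨d, rfl⟩ := Nat.exists_eq_add_of_le hn
      rw [add_comm, pow_add, ContinuousLinearMap.mul_apply, cast k w, hk, map_zero]
    -- key formula
    have key : ∀ t : ℝ, NormedSpace.exp ((t : ℂ) • N) w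
        = ∑ j ∈ Finset.range k,
            (Complex.exp ((t : ℂ) * μ) * (((j.factorial : ℂ))⁻¹ * (t : ℂ) ^ j)) •
              (((N - μ • 1) ^ j) w) := by
      intro t
      letI : NormedAlgebra ℚ ((Fin m → ℂ) →L[ℂ] (Fin m → ℂ)) := NormedAlgebra.restrictScalars ℚ ℂ _
      have hsplit : (t : ℂ) • N = (t : ℂ) • (N - μ • 1) + ((t : ℂ) * μ) • 1 := by
        rw [smul_sub, smul_smul, sub_add_cancel]
      have hcomm : Commute ((t : ℂ) • (N - μ • 1)) (((t : ℂ) * μ) • (1 : (Fin m → ℂ) →L[ℂ] (Fin m → ℂ))) := by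
        show _ * _ = _ * _
        ext x
        simp [ContinuousLinearMap.mul_apply, smul_smul, mul_comm]
      have hscalar : NormedSpace.exp (((t : ℂ) * μ) • (1 : (Fin m → ℂ) →L[ℂ] (Fin m → ℂ)))
          = Complex.exp ((t : ℂ) * μ) • 1 := by
        rw [← Algebra.algebraMap_eq_smul_one, ← NormedSpace.algebraMap_exp_comm,
          ← Complex.exp_eq_exp_ℂ, Algebra.algebraMap_eq_smul_one]
      have hnil : NormedSpace.exp ((t : ℂ) • (N - μ • 1)) w
          = ∑ j ∈ Finset.range k, (((j.factorial : ℂ))⁻¹ * (t : ℂ) ^ j) • (((N - μ • 1) ^ j) w) := by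
        rw [NormedSpace.exp_eq_tsum ℂ]
        have hsum : Summable (fun n : ℕ => ((n.factorial : ℂ))⁻¹ • ((t : ℂ) • (N - μ • 1)) ^ n) :=
          NormedSpace.expSeries_summable' _
        have heval := ((ContinuousLinearMap.apply ℂ (Fin m → ℂ) w).map_tsum hsum)
        rw [ContinuousLinearMap.apply_apply] at heval
        rw [heval]
        have hpow : ∀ (z : ℕ) (X : (Fin m → ℂ) →L[ℂ] (Fin m → ℂ)) (x : Fin m → ℂ),
            (((t : ℂ) • X) ^ z) x = (t : ℂ) ^ z • ((X ^ z) x) := by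
          intro z X
          induction z with
          | zero => intro x; simp
          | succ z ih =>
            intro x
            simp only [pow_succ, ContinuousLinearMap.mul_apply, ContinuousLinearMap.smul_apply,
              ih, _root_.map_smul, smul_smul]
        have hterm : ∀ z : ℕ,
            (ContinuousLinearMap.apply ℂ (Fin m → ℂ) w)
                (((z.factorial : ℂ))⁻¹ • ((t : ℂ) • (N - μ • 1)) ^ z)
              = (((z.factorial : ℂ))⁻¹ * (t : ℂ) ^ z) • (((N - μ • 1) ^ z) w) := by
          intro z
          simp [ContinuousLinearMap.apply_apply, hpow, smul_smul]
        rw [tsum_congr hterm, tsum_eq_sum (s := Finset.range k) ?_]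
        intro n hn
        have hkn : k ≤ n := by
          by_contra hlt
          exact hn (Finset.mem_range.2 (lt_of_not_ge hlt))
        rw [hzero n hkn, smul_zero]
      calc NormedSpace.exp ((t : ℂ) • N) w
          = (NormedSpace.exp ((t : ℂ) • (N - μ • 1)) *
              NormedSpace.exp (((t : ℂ) * μ) • 1)) w := by
            rw [hsplit, NormedSpace.exp_add_of_commute hcomm]
        _ = Complex.exp ((t : ℂ) * μ) • (NormedSpace.exp ((t : ℂ) • (N - μ • 1)) w) := by
            rw [hscalar, ContinuousLinearMap.mul_apply]
            simp
        _ = _ := by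
            rw [hnil, Finset.smul_sum]
            refine Finset.sum_congr rfl fun j _ => ?_
            rw [smul_smul]
    -- conclude tendsto
    show Tendsto _ atTop _
    have hsum0 : Tendsto (fun t : ℝ => ∑ j ∈ Finset.range k,
        (Complex.exp ((t : ℂ) * μ) * (((j.factorial : ℂ))⁻¹ * (t : ℂ) ^ j)) •
          (((N - μ • 1) ^ j) w)) atTop (𝓝 0) := by
      have : Tendsto (fun t : ℝ => ∑ j ∈ Finset.range k,
          (Complex.exp ((t : ℂ) * μ) * (((j.factorial : ℂ))⁻¹ * (t : ℂ) ^ j)) •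
            (((N - μ • 1) ^ j) w)) atTop (𝓝 (∑ j ∈ Finset.range k, 0)) := by
        refine tendsto_finset_sum _ fun j _ => ?_
        have hcoef : Tendsto (fun t : ℝ =>
            Complex.exp ((t : ℂ) * μ) * (((j.factorial : ℂ))⁻¹ * (t : ℂ) ^ j)) atTop (𝓝 0) := by
          rw [tendsto_zero_iff_norm_tendsto_zero]
          have hb : Tendsto (fun t : ℝ => ((j.factorial : ℝ))⁻¹ * (t ^ j * Real.exp (μ.re * t)))
              atTop (𝓝 0) := by
            have := (aux_tendsto j hμ).const_mul (((j.factorial : ℝ))⁻¹)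
            rwa [mul_zero] at this
          refine squeeze_zero_norm' ?_ hb
          filter_upwards [eventually_ge_atTop (0:ℝ)] with t ht
          have : ‖Complex.exp ((t : ℂ) * μ) * (((j.factorial : ℂ))⁻¹ * (t : ℂ) ^ j)‖
              = Real.exp (μ.re * t) * (((j.factorial : ℝ))⁻¹ * t ^ j) := by
            rw [norm_mul, norm_mul, Complex.norm_exp]
            have h1 : ((t : ℂ) * μ).re = μ.re * t := by
              simp [Complex.mul_re, mul_comm]
            rw [h1]
            simp [abs_of_nonneg ht]
          rw [norm_norm, this]
          ring_nf
          exact le_of_eq (by ring)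
        simpa using hcoef.smul_const (((N - μ • 1) ^ j) w)
      simpa using this
    exact hsum0.congr fun t => (key t).symm
  exact htop Submodule.mem_top

set_option maxHeartbeats 1000000 in
lemma exp_norm_tendsto {m : ℕ} (C : Matrix (Fin m) (Fin m) ℂ)
    (hC : ∀ μ ∈ spectrum ℂ C, μ.re < 0) :
    Tendsto (fun t : ℝ => ‖NormedSpace.exp ((t : ℂ) • toCLM C)‖) atTop (𝓝 0) := by
  have hcomm : ∀ t : ℝ, NormedSpace.exp ((t : ℂ) • toCLM C)
      = toCLM (NormedSpace.exp ((t : ℂ) • C)) := by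
    intro t
    rw [toCLM_exp, _root_.map_smul]
  have hmat : Tendsto (fun t : ℝ => NormedSpace.exp ((t : ℂ) • C)) atTop (𝓝 0) := by
    refine tendsto_pi_nhds.2 ?_
    intro i
    rw [tendsto_pi_nhds]
    intro j
    have hentry : ∀ t : ℝ, NormedSpace.exp ((t : ℂ) • C) i j
        = (NormedSpace.exp ((t : ℂ) • toCLM C) (Pi.single j 1)) i := by
      intro t
      rw [hcomm t, toCLM_apply, Matrix.mulVec_single_one]
      rfl
    have := ((continuous_apply i).tendsto (0 : Fin m → ℂ)).comp
      (exp_apply_tendsto C hC (Pi.single j 1))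
    simp only [Function.comp_def] at this
    refine (by simpa using this : Tendsto _ atTop (𝓝 (0:ℂ))).congr fun t => (hentry t).symm
  have hcont := toCLM_continuous (m := m)
  have h2 : Tendsto (fun t : ℝ => toCLM (NormedSpace.exp ((t : ℂ) • C))) atTop (𝓝 0) := by
    have := (hcont.tendsto 0).comp hmat
    simpa [Function.comp_def, map_zero] using this
  have h3 : Tendsto (fun t : ℝ => NormedSpace.exp ((t : ℂ) • toCLM C)) atTop (𝓝 0) :=
    h2.congr fun t => (hcomm t).symm
  simpa using h3.norm

noncomputable abbrev RSL (m : ℕ) :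
    ((Fin m → ℂ) →L[ℂ] (Fin m → ℂ)) →L[ℝ] ((Fin m → ℂ) →L[ℝ] (Fin m → ℂ)) :=
  ContinuousLinearMap.restrictScalarsL ℂ (Fin m → ℂ) (Fin m → ℂ) ℝ ℝ

set_option maxHeartbeats 1000000 in
lemma ode_exp {m : ℕ} (N : (Fin m → ℂ) →L[ℂ] (Fin m → ℂ)) (f : ℝ → (Fin m → ℂ))
    (hf : Differentiable ℝ f) (hode : ∀ t : ℝ, 0 ≤ t → deriv f t = N (f t)) :
    ∀ t : ℝ, 0 ≤ t → f t = NormedSpace.exp ((t : ℂ) • N) (f 0) := by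
  have hE : ∀ s : ℝ, HasDerivAt (fun s : ℝ => NormedSpace.exp (((-s : ℝ) : ℂ) • N))
      ((-1 : ℝ) • (NormedSpace.exp (((-s : ℝ) : ℂ) • N) * N)) s := by
    intro s
    have h1 : ∀ y : ℝ, HasDerivAt (fun y : ℝ => NormedSpace.exp ((y : ℂ) • N))
        (NormedSpace.exp ((y : ℂ) • N) * N) y := by
      intro y
      have hof : HasDerivAt (fun y : ℝ => (y : ℂ)) 1 y := by
        have := Complex.ofRealCLM.hasDerivAt (x := y)
        exact this
      have h2 := hasDerivAt_exp_smul_const (𝕂 := ℂ) N (y : ℂ)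
      have h3 := HasDerivAt.scomp y h2 hof
      simp only [Function.comp_def, one_smul] at h3
      exact h3
    exact (h1 (-s)).scomp s (hasDerivAt_neg s)
  have hE' : ∀ s : ℝ, HasDerivAt
      (fun s : ℝ => (NormedSpace.exp (((-s : ℝ) : ℂ) • N)).restrictScalars ℝ)
      ((RSL m) ((-1 : ℝ) • (NormedSpace.exp (((-s : ℝ) : ℂ) • N) * N))) s := by
    intro s
    exact (RSL m).hasFDerivAt.comp_hasDerivAt s (hE s)
  set g : ℝ → (Fin m → ℂ) := fun s =>
    ((NormedSpace.exp (((-s : ℝ) : ℂ) • N)).restrictScalars ℝ) (f s) with hg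
  have hgd : ∀ s : ℝ, HasDerivAt g
      (((RSL m) ((-1 : ℝ) • (NormedSpace.exp (((-s : ℝ) : ℂ) • N) * N))) (f s)
        + ((NormedSpace.exp (((-s : ℝ) : ℂ) • N)).restrictScalars ℝ) (deriv f s)) s := by
    intro s
    exact (hE' s).clm_apply (hf s).hasDerivAt
  have hg0 : ∀ s : ℝ, 0 ≤ s → HasDerivAt g 0 s := by
    intro s hs
    have := hgd s
    rw [hode s hs] at this
    convert this using 1
    simp [RSL, ContinuousLinearMap.coe_restrict_scalarsL', ContinuousLinearMap.mul_apply,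
      ContinuousLinearMap.coe_restrictScalars']
  intro t ht
  have hconst : g t = g 0 := by
    have := constant_of_has_deriv_right_zero
      (f := g) (a := 0) (b := t)
      (Continuous.continuousOn (by
        exact continuous_iff_continuousAt.2 fun s => (hgd s).continuousAt))
      (fun x hx => (hg0 x hx.1).hasDerivWithinAt)
    exact this t (Set.right_mem_Icc.2 ht)
  have h00 : (((-(0:ℝ) : ℝ)) : ℂ) • N = 0 := by
    rw [show ((-(0:ℝ) : ℝ) : ℂ) = (0 : ℂ) by norm_num]
    exact zero_smul ℂ N
  have hg00 : g 0 = f 0 := by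
    show ((NormedSpace.exp (((-(0:ℝ) : ℝ) : ℂ) • N)).restrictScalars ℝ) (f 0) = f 0
    rw [h00, NormedSpace.exp_zero]
    rfl
  have hkey : NormedSpace.exp ((-(t : ℂ)) • N) (f t) = f 0 := by
    have h2 := hconst.trans hg00
    rw [show (-(t : ℂ)) = ((-t : ℝ) : ℂ) by norm_num]
    exact h2
  have hcc : Commute ((t : ℂ) • N) ((-(t : ℂ)) • N) := by
    show _ * _ = _ * _
    ext x
    simp [ContinuousLinearMap.mul_apply, _root_.map_smul, smul_smul]
  have hsmul0 : (t : ℂ) • N + (-(t : ℂ)) • N = 0 := by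
    ext x
    simp [add_smul]
  letI : NormedAlgebra ℚ ((Fin m → ℂ) →L[ℂ] (Fin m → ℂ)) := NormedAlgebra.restrictScalars ℚ ℂ _
  have hinv : NormedSpace.exp ((t : ℂ) • N) * NormedSpace.exp ((-(t : ℂ)) • N) = 1 := by
    rw [← NormedSpace.exp_add_of_commute hcc, hsmul0, NormedSpace.exp_zero]
  calc f t = (1 : (Fin m → ℂ) →L[ℂ] (Fin m → ℂ)) (f t) := rfl
    _ = (NormedSpace.exp ((t : ℂ) • N) * NormedSpace.exp ((-(t : ℂ)) • N)) (f t) := by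
        rw [hinv]
    _ = NormedSpace.exp ((t : ℂ) • N) (NormedSpace.exp ((-(t : ℂ)) • N) (f t)) := rfl
    _ = NormedSpace.exp ((t : ℂ) • N) (f 0) := by rw [hkey]

lemma charpoly_eval {m : ℕ} (A : Matrix (Fin m) (Fin m) ℂ) (μ : ℂ) :
    A.charpoly.eval μ = (Matrix.scalar (Fin m) μ - A).det := by
  rw [Matrix.charpoly, eval_det, Matrix.matPolyEquiv_charmatrix]
  simp

lemma mem_spectrum_iff_isRoot {m : ℕ} (A : Matrix (Fin m) (Fin m) ℂ) (μ : ℂ) :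
    μ ∈ spectrum ℂ A ↔ A.charpoly.IsRoot μ := by
  rw [spectrum.mem_iff, Polynomial.IsRoot, charpoly_eval]
  have h1 : (algebraMap ℂ (Matrix (Fin m) (Fin m) ℂ)) μ = Matrix.scalar (Fin m) μ := by
    rw [Matrix.algebraMap_eq_diagonal, Matrix.scalar_apply]
    congr 1
  rw [h1, Matrix.isUnit_iff_isUnit_det, isUnit_iff_ne_zero, not_ne_iff]

lemma mem_spectrum_conjTranspose {m : ℕ} (A : Matrix (Fin m) (Fin m) ℂ) (μ : ℂ)
    (h : μ ∈ spectrum ℂ Aᴴ) : (starRingEnd ℂ) μ ∈ spectrum ℂ A := by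
  rw [spectrum.mem_iff] at h ⊢
  intro hu
  apply h
  have : (algebraMap ℂ (Matrix (Fin m) (Fin m) ℂ)) μ - Aᴴ
      = ((algebraMap ℂ (Matrix (Fin m) (Fin m) ℂ)) ((starRingEnd ℂ) μ) - A)ᴴ := by
    ext i j
    by_cases hij : i = j
    · simp [Matrix.conjTranspose_apply, Matrix.algebraMap_eq_diagonal,
        Matrix.diagonal_apply, hij]
    · simp [Matrix.conjTranspose_apply, Matrix.algebraMap_eq_diagonal,
        Matrix.diagonal_apply, hij, Ne.symm hij]
  rw [this, Matrix.isUnit_conjTranspose]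
  exact hu


set_option maxHeartbeats 1000000 in
/-- for `A_c` Hurwitz, if `Z₁′ = A_c·Z₁ + B·Z₂`, `Z₂′ = −A_cᴴ·Z₂` on
`t ≥ 0` and `Z₂(t) → 0` as `t → ∞`, then `Z₂ ≡ 0` on `t ≥ 0`,
`Z₁(t) = exp(t·A_c)·Z₁(0)`, and `Z₁(t) → 0`. -/
theorem triangular_bvp_solution (m : ℕ)
    (Ac B : Matrix (Fin m) (Fin m) ℂ) (hAc : IsHurwitz Ac)
    (Z₁ Z₂ : ℝ → (Fin m → ℂ))
    (hZ₁ : Differentiable ℝ Z₁) (hZ₂ : Differentiable ℝ Z₂)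
    (hode₁ : ∀ t : ℝ, 0 ≤ t → deriv Z₁ t = Ac.mulVec (Z₁ t) + B.mulVec (Z₂ t))
    (hode₂ : ∀ t : ℝ, 0 ≤ t → deriv Z₂ t = -(Acᴴ.mulVec (Z₂ t)))
    (hlim : Tendsto Z₂ atTop (nhds 0)) :
    (∀ t : ℝ, 0 ≤ t → Z₂ t = 0) ∧
    (∀ t : ℝ, 0 ≤ t → Z₁ t = (NormedSpace.exp ((t : ℂ) • Ac)).mulVec (Z₁ 0)) ∧
    Tendsto Z₁ atTop (nhds 0) := by
  have hspecA : ∀ μ ∈ spectrum ℂ Ac, μ.re < 0 := fun μ hμ =>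
    hAc μ ((mem_spectrum_iff_isRoot Ac μ).1 hμ)
  have hspecH : ∀ μ ∈ spectrum ℂ Acᴴ, μ.re < 0 := by
    intro μ hμ
    have h1 := mem_spectrum_conjTranspose Ac μ hμ
    have h2 := hAc _ ((mem_spectrum_iff_isRoot Ac _).1 h1)
    simpa using h2
  set K : (Fin m → ℂ) →L[ℂ] (Fin m → ℂ) := toCLM Acᴴ with hK
  -- Z₂ solves the exponential ODE
  have h2exp : ∀ t : ℝ, 0 ≤ t → Z₂ t = NormedSpace.exp ((t : ℂ) • (-K)) (Z₂ 0) := by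
    refine ode_exp (-K) Z₂ hZ₂ ?_
    intro t ht
    rw [hode₂ t ht]
    simp [hK]
  have hback : ∀ t : ℝ, 0 ≤ t → NormedSpace.exp ((t : ℂ) • K) (Z₂ t) = Z₂ 0 := by
    intro t ht
    rw [h2exp t ht]
    have hsmul : (t : ℂ) • (-K) = -((t : ℂ) • K) := by ext x; simp
    have hcc : Commute ((t : ℂ) • K) (-((t : ℂ) • K)) := by
      show _ * _ = _ * _
      ext x
      simp [ContinuousLinearMap.mul_apply, _root_.map_smul, smul_smul]
      ring
    letI : NormedAlgebra ℚ ((Fin m → ℂ) →L[ℂ] (Fin m → ℂ)) := NormedAlgebra.restrictScalars ℚ ℂ _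
    have hone : NormedSpace.exp ((t : ℂ) • K) * NormedSpace.exp (-((t : ℂ) • K)) = 1 := by
      rw [← NormedSpace.exp_add_of_commute hcc, add_neg_cancel, NormedSpace.exp_zero]
    calc NormedSpace.exp ((t : ℂ) • K) (NormedSpace.exp ((t : ℂ) • (-K)) (Z₂ 0))
        = (NormedSpace.exp ((t : ℂ) • K) * NormedSpace.exp ((t : ℂ) • (-K))) (Z₂ 0) := rfl
      _ = Z₂ 0 := by rw [hsmul, hone]; rfl
  have hZ20 : Z₂ 0 = 0 := by
    have hnorm : ∀ᶠ t : ℝ in atTop, ‖Z₂ 0‖ ≤ ‖NormedSpace.exp ((t : ℂ) • K)‖ * ‖Z₂ t‖ := by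
      filter_upwards [eventually_ge_atTop (0:ℝ)] with t ht
      rw [← hback t ht]
      exact (NormedSpace.exp ((t : ℂ) • K)).le_opNorm _
    have hmul : Tendsto (fun t : ℝ => ‖NormedSpace.exp ((t : ℂ) • K)‖ * ‖Z₂ t‖)
        atTop (𝓝 0) := by
      have := (exp_norm_tendsto Acᴴ hspecH).mul hlim.norm
      simpa using this
    have hle : ‖Z₂ 0‖ ≤ 0 := ge_of_tendsto hmul hnorm
    have : ‖Z₂ 0‖ = 0 := le_antisymm hle (norm_nonneg _)
    exact norm_eq_zero.1 this
  have hZ2 : ∀ t : ℝ, 0 ≤ t → Z₂ t = 0 := by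
    intro t ht
    rw [h2exp t ht, hZ20, map_zero]
  have h1exp : ∀ t : ℝ, 0 ≤ t → Z₁ t = NormedSpace.exp ((t : ℂ) • toCLM Ac) (Z₁ 0) := by
    refine ode_exp (toCLM Ac) Z₁ hZ₁ ?_
    intro t ht
    rw [hode₁ t ht, hZ2 t ht]
    simp
  have hbridge : ∀ t : ℝ, NormedSpace.exp ((t : ℂ) • toCLM Ac) (Z₁ 0)
      = (NormedSpace.exp ((t : ℂ) • Ac)).mulVec (Z₁ 0) := by
    intro t
    rw [show ((t : ℂ) • toCLM Ac) = toCLM ((t : ℂ) • Ac) from (_root_.map_smul _ _ _).symm,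
      ← toCLM_exp, toCLM_apply]
  refine ⟨hZ2, fun t ht => by rw [h1exp t ht, hbridge t], ?_⟩
  have hptw := exp_apply_tendsto Ac hspecA (Z₁ 0)
  refine hptw.congr' ?_
  filter_upwards [eventually_ge_atTop (0:ℝ)] with t ht
  exact (h1exp t ht).symm
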